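/- Let τ and d be real numbers with 0 < τ < d, let α = α(τ,d), and let m ≥ 3 be an integer. Then K_m ≥ 1 - 2^{1-m/2}·(τ/d)^{m-1} ≥ 1 - 1/√2; in particular |C_3| ≥ (1 - 1/√2)·τ/|α|³. -/

import Mathlib

/-- The saddle point `α(τ,d) = -i (d/τ - √(d²/τ² - 1))`. -/
noncomputable def alph (τ d : ℝ) : ℂ :=
  -Complex.I * ((d / τ - Real.sqrt (d ^ 2 / τ ^ 2 - 1) : ℝ) : ℂ)

/-- `C_m = (-1)^{m+1} d/(1+α)^m + d/(1-α)^m + (-1)^{m+1} iτ/α^m`. -/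
noncomputable def Cm (τ d : ℝ) (m : ℕ) : ℂ :=
  (-1) ^ (m + 1) * (d : ℂ) / (1 + alph τ d) ^ m + (d : ℂ) / (1 - alph τ d) ^ m +
    (-1) ^ (m + 1) * Complex.I * (τ : ℂ) / alph τ d ^ m

/-- `K_m = 1 - (iτ/d)^{m-1} [(-1)^{m+1} ((1-α)/2)^m + ((1+α)/2)^m]`. -/
noncomputable def Kc (τ d : ℝ) (m : ℕ) : ℂ :=
  1 - (Complex.I * (τ : ℂ) / (d : ℂ)) ^ (m - 1) *
    ((-1) ^ (m + 1) * ((1 - alph τ d) / 2) ^ m + ((1 + alph τ d) / 2) ^ m)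

set_option maxHeartbeats 1000000 in
/-- For `m ≥ 3`, `K_m ≥ 1 - 2^{1-m/2}(τ/d)^{m-1} ≥ 1 - 1/√2`; in particular
`|C₃| ≥ (1 - 1/√2) τ/|α|³`. -/
theorem K_lower_bound (τ d : ℝ) (h0 : 0 < τ) (hτd : τ < d) (m : ℕ) (hm : 3 ≤ m) :
    1 - (2 : ℝ) ^ ((1 : ℝ) - (m : ℝ) / 2) * (τ / d) ^ (m - 1) ≤ (Kc τ d m).re ∧
    1 - 1 / Real.sqrt 2 ≤ 1 - (2 : ℝ) ^ ((1 : ℝ) - (m : ℝ) / 2) * (τ / d) ^ (m - 1) ∧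
    (1 - 1 / Real.sqrt 2) * τ / ‖alph τ d‖ ^ 3 ≤ ‖Cm τ d 3‖ := by
  have hd : 0 < d := h0.trans hτd
  obtain ⟨s, hs⟩ : ∃ x, Real.sqrt (d ^ 2 / τ ^ 2 - 1) = x := ⟨_, rfl⟩
  obtain ⟨a, ha⟩ : ∃ x, d / τ - s = x := ⟨_, rfl⟩
  have hx : 1 < d / τ := (one_lt_div h0).mpr hτd
  have hnn : 0 ≤ d ^ 2 / τ ^ 2 - 1 := by
    have : d ^ 2 / τ ^ 2 = (d / τ) ^ 2 := by rw [div_pow]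
    nlinarith
  have hs2 : s ^ 2 = d ^ 2 / τ ^ 2 - 1 := by rw [← hs]; exact Real.sq_sqrt hnn
  have hsn : 0 ≤ s := hs ▸ Real.sqrt_nonneg _
  have hdt : d ^ 2 / τ ^ 2 = (d / τ) ^ 2 := by rw [div_pow]
  have ha_pos : 0 < a := by rw [← ha]; nlinarith [hs2, hsn, hx]
  have ha1 : a ≤ 1 := by rw [← ha]; nlinarith [hs2, hsn, hx]
  have hτ : τ ≠ 0 := ne_of_gt h0
  have hs2' : τ ^ 2 * s ^ 2 = d ^ 2 - τ ^ 2 := by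
    rw [hs2]; field_simp
  have hkeyR : τ * (a ^ 2 + 1) = 2 * d * a := by
    rw [← ha]
    field_simp
    linear_combination hs2'
  have halph : alph τ d = -Complex.I * (a : ℂ) := by rw [alph, hs, ha]
  have habs : ‖alph τ d‖ = a := by
    simp [halph, norm_mul, Complex.norm_real, Real.norm_eq_abs, abs_of_pos ha_pos]
  have h1p : ‖1 + alph τ d‖ = Real.sqrt (1 + a ^ 2) := by
    have h : (1 : ℂ) + alph τ d = ((1:ℝ) : ℂ) + ((-a : ℝ) : ℂ) * Complex.I := by
      rw [halph]; push_cast; ring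
    rw [h, Complex.norm_add_mul_I]; ring_nf
  have h1m : ‖1 - alph τ d‖ = Real.sqrt (1 + a ^ 2) := by
    have h : (1 : ℂ) - alph τ d = ((1:ℝ) : ℂ) + ((a : ℝ) : ℂ) * Complex.I := by
      rw [halph]; push_cast; ring
    rw [h, Complex.norm_add_mul_I]; ring_nf
  -- rpow facts
  have hsqrt2 : Real.sqrt 2 * Real.sqrt 2 = 2 := Real.mul_self_sqrt (by norm_num)
  have hsqrt2pos : 0 < Real.sqrt 2 := Real.sqrt_pos.mpr (by norm_num)
  have hhalf : Real.sqrt 2 / 2 = (2:ℝ) ^ (-(1/2) : ℝ) := by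
    rw [Real.rpow_neg (by norm_num : (0:ℝ) ≤ 2), ← Real.sqrt_eq_rpow]
    field_simp
    exact Real.sq_sqrt (by norm_num)
  have hinv : 1 / Real.sqrt 2 = (2:ℝ) ^ (-(1/2) : ℝ) := by
    rw [← hhalf]
    rw [div_eq_div_iff hsqrt2pos.ne' (by norm_num : (2:ℝ) ≠ 0)]
    linarith [hsqrt2]
  have hpow : ∀ n : ℕ, 2 * (Real.sqrt 2 / 2) ^ n = (2:ℝ) ^ ((1:ℝ) - (n:ℝ)/2) := by
    intro n
    rw [hhalf, ← Real.rpow_natCast ((2:ℝ) ^ (-(1/2):ℝ)) n,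
      ← Real.rpow_mul (by norm_num : (0:ℝ) ≤ 2),
      show (1:ℝ) - (n:ℝ)/2 = 1 + (-(1/2) * n) by ring,
      Real.rpow_add (by norm_num : (0:ℝ) < 2), Real.rpow_one]
  have hsle : Real.sqrt (1 + a ^ 2) ≤ Real.sqrt 2 := Real.sqrt_le_sqrt (by nlinarith)
  have habsτd : ‖Complex.I * (τ:ℂ) / (d:ℂ)‖ = τ / d := by
    simp [norm_div, norm_mul, Complex.norm_real, Real.norm_eq_abs, abs_of_pos h0, abs_of_pos hd]
  have hone : ‖(1 - alph τ d)/2‖ ≤ Real.sqrt 2 / 2 := by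
    rw [norm_div, h1m, Complex.norm_two]
    gcongr
  have hone' : ‖(1 + alph τ d)/2‖ ≤ Real.sqrt 2 / 2 := by
    rw [norm_div, h1p, Complex.norm_two]
    gcongr
  have main : ∀ n : ℕ, 3 ≤ n →
      1 - (2:ℝ) ^ ((1:ℝ) - (n:ℝ)/2) * (τ/d) ^ (n-1) ≤ (Kc τ d n).re ∧
      1 - 1/Real.sqrt 2 ≤ 1 - (2:ℝ) ^ ((1:ℝ) - (n:ℝ)/2) * (τ/d) ^ (n-1) := by
    intro n hn
    set z : ℂ := (Complex.I * (τ:ℂ) / (d:ℂ)) ^ (n-1) *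
        ((-1) ^ (n+1) * ((1 - alph τ d)/2) ^ n + ((1 + alph τ d)/2) ^ n) with hz
    have hzabs : ‖z‖ ≤ (2:ℝ) ^ ((1:ℝ) - (n:ℝ)/2) * (τ/d) ^ (n-1) := by
      rw [hz, norm_mul, norm_pow, habsτd]
      have hsum : ‖(-1) ^ (n+1) * ((1 - alph τ d)/2) ^ n + ((1 + alph τ d)/2) ^ n‖
          ≤ 2 * (Real.sqrt 2 / 2) ^ n := by
        refine le_trans (norm_add_le _ _) ?_
        simp only [norm_mul, norm_pow]
        have h1 : ‖(-1:ℂ)‖ = 1 := by simp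
        rw [h1, one_pow, one_mul]
        have p1 : ‖(1 - alph τ d)/2‖ ^ n ≤ (Real.sqrt 2 / 2) ^ n :=
          pow_le_pow_left₀ (norm_nonneg _) hone n
        have p2 : ‖(1 + alph τ d)/2‖ ^ n ≤ (Real.sqrt 2 / 2) ^ n :=
          pow_le_pow_left₀ (norm_nonneg _) hone' n
        linarith
      calc (τ/d) ^ (n-1) * ‖(-1) ^ (n+1) * ((1 - alph τ d)/2) ^ n + ((1 + alph τ d)/2) ^ n‖
          ≤ (τ/d) ^ (n-1) * (2 * (Real.sqrt 2 / 2) ^ n) := by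
            exact mul_le_mul_of_nonneg_left hsum (pow_nonneg (div_nonneg h0.le hd.le) _)
        _ = (2:ℝ) ^ ((1:ℝ) - (n:ℝ)/2) * (τ/d) ^ (n-1) := by rw [hpow n]; ring
    constructor
    · have hre : (Kc τ d n).re = 1 - z.re := by
        rw [Kc, hz, Complex.sub_re, Complex.one_re]
      rw [hre]
      have := (Complex.re_le_norm z).trans hzabs
      linarith
    · have hpow2 : (2:ℝ) ^ ((1:ℝ) - (n:ℝ)/2) ≤ (2:ℝ) ^ (-(1/2):ℝ) := by
        apply Real.rpow_le_rpow_of_exponent_le (by norm_num)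
        have : (3:ℝ) ≤ (n:ℝ) := by exact_mod_cast hn
        linarith
      have hτd1 : (τ/d) ^ (n-1) ≤ 1 :=
        pow_le_one₀ (div_nonneg h0.le hd.le) ((div_le_one hd).mpr hτd.le)
      have hmul : (2:ℝ) ^ ((1:ℝ) - (n:ℝ)/2) * (τ/d) ^ (n-1) ≤ (2:ℝ) ^ (-(1/2):ℝ) * 1 :=
        mul_le_mul hpow2 hτd1 (pow_nonneg (div_nonneg h0.le hd.le) _)
          (Real.rpow_nonneg (by norm_num) _)
      rw [mul_one, ← hinv] at hmul
      linarith
  refine ⟨(main m hm).1, (main m hm).2, ?_⟩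
  -- Part 3
  have ha0 : (a:ℂ) ≠ 0 := by exact_mod_cast ne_of_gt ha_pos
  have hα0 : alph τ d ≠ 0 := by
    rw [halph]; exact mul_ne_zero (neg_ne_zero.mpr Complex.I_ne_zero) ha0
  have h1p0 : (1:ℂ) + alph τ d ≠ 0 := by
    intro h
    have := congrArg norm h
    rw [h1p, norm_zero] at this
    have := Real.sqrt_pos.mpr (by nlinarith : (0:ℝ) < 1 + a ^ 2)
    linarith
  have h1m0 : (1:ℂ) - alph τ d ≠ 0 := by
    intro h
    have := congrArg norm h
    rw [h1m, norm_zero] at this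
    have := Real.sqrt_pos.mpr (by nlinarith : (0:ℝ) < 1 + a ^ 2)
    linarith
  have hd0 : (d:ℂ) ≠ 0 := by exact_mod_cast ne_of_gt hd
  have hτ0 : (τ:ℂ) ≠ 0 := by exact_mod_cast hτ
  have hkeyC : (τ:ℂ) * ((a:ℂ) ^ 2 + 1) = 2 * (d:ℂ) * (a:ℂ) := by
    have := congrArg (fun x : ℝ => (x : ℂ)) hkeyR
    push_cast at this
    exact this
  have h1p0' : (1:ℂ) + -Complex.I * (a:ℂ) ≠ 0 := by rw [← halph]; exact h1p0
  have h1m0' : (1:ℂ) - -Complex.I * (a:ℂ) ≠ 0 := by rw [← halph]; exact h1m0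
  have hα2 : (alph τ d) ^ 2 = -((a:ℂ) ^ 2) := by
    rw [halph]; linear_combination (a:ℂ) ^ 2 * Complex.I_sq
  have hα3 : (alph τ d) ^ 3 = Complex.I * (a:ℂ) ^ 3 := by
    rw [halph]; linear_combination (-Complex.I * (a:ℂ) ^ 3) * Complex.I_sq
  have key1 : (1 + alph τ d) * (1 - alph τ d) * (τ:ℂ) = 2 * (d:ℂ) * (a:ℂ) := by
    rw [halph]; linear_combination hkeyC - (τ:ℂ) * (a:ℂ) ^ 2 * Complex.I_sq
  have hu3 : (1 + alph τ d) ^ 3 * (1 - alph τ d) ^ 3 * (τ:ℂ) ^ 3 = 8 * (d:ℂ) ^ 3 * (a:ℂ) ^ 3 := by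
    linear_combination (((1 + alph τ d) * (1 - alph τ d) * (τ:ℂ)) ^ 2 +
      ((1 + alph τ d) * (1 - alph τ d) * (τ:ℂ)) * (2 * (d:ℂ) * (a:ℂ)) + (2 * (d:ℂ) * (a:ℂ)) ^ 2) * key1
  have hC : Cm τ d 3 = (((τ / a ^ 3 : ℝ)) : ℂ) * Kc τ d 3 := by
    have e1 : Cm τ d 3 = (d:ℂ) / (1 + alph τ d) ^ 3 + (d:ℂ) / (1 - alph τ d) ^ 3 +
        Complex.I * (τ:ℂ) / alph τ d ^ 3 := by
      rw [Cm]; norm_num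
    have e2 : Kc τ d 3 = 1 - (Complex.I * (τ:ℂ) / (d:ℂ)) ^ 2 *
        (((1 - alph τ d) / 2) ^ 3 + ((1 + alph τ d) / 2) ^ 3) := by
      rw [Kc]; norm_num
    have hsum : (d:ℂ) / (1 + alph τ d) ^ 3 + (d:ℂ) / (1 - alph τ d) ^ 3 =
        (τ:ℂ) ^ 3 * ((1 - alph τ d) ^ 3 + (1 + alph τ d) ^ 3) / (8 * (d:ℂ) ^ 2 * (a:ℂ) ^ 3) := by
      rw [div_add_div _ _ (pow_ne_zero 3 h1p0) (pow_ne_zero 3 h1m0),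
        div_eq_div_iff (by exact mul_ne_zero (pow_ne_zero 3 h1p0) (pow_ne_zero 3 h1m0))
          (by simp [hd0, ha0] : (8 * (d:ℂ) ^ 2 * (a:ℂ) ^ 3) ≠ 0)]
      linear_combination (-(((1 - alph τ d) ^ 3 + (1 + alph τ d) ^ 3))) * hu3
    have hIα : Complex.I * (τ:ℂ) / (alph τ d) ^ 3 = (τ:ℂ) / (a:ℂ) ^ 3 := by
      rw [hα3, mul_div_mul_left _ _ Complex.I_ne_zero]
    have hIsq : (Complex.I * (τ:ℂ) / (d:ℂ)) ^ 2 = -((τ:ℂ) ^ 2) / (d:ℂ) ^ 2 := by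
      rw [div_pow, mul_pow, Complex.I_sq]; ring
    rw [e1, e2, hsum, hIα, hIsq]
    rw [Complex.ofReal_div, Complex.ofReal_pow]
    field_simp [ha0, hd0]
    ring
  have hK3 : 1 - 1/Real.sqrt 2 ≤ ‖Kc τ d 3‖ := by
    have h3 := main 3 le_rfl
    exact le_trans (h3.2.trans h3.1) (Complex.re_le_norm _)
  have hCabs : ‖Cm τ d 3‖ = τ / a ^ 3 * ‖Kc τ d 3‖ := by
    rw [hC, norm_mul, Complex.norm_real, Real.norm_eq_abs, abs_of_pos (by positivity)]
  rw [habs, hCabs]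
  calc (1 - 1/Real.sqrt 2) * τ / a ^ 3 = (τ / a ^ 3) * (1 - 1/Real.sqrt 2) := by ring
    _ ≤ (τ / a ^ 3) * ‖Kc τ d 3‖ :=
        mul_le_mul_of_nonneg_left hK3 (by positivity)
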